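/- Let p ≤ n be positive integers, let G ∈ ℍ^{n×n} be Hermitian positive definite, let X ∈ ℍ^{n×p} satisfy XᴴGX = I_p, and let X⊥ ∈ ℍ^{n×(n−p)} satisfy X⊥ᴴGX⊥ = I_{n−p} and XᴴGX⊥ = 0. Then the set {ξ ∈ ℍ^{n×p} | ξᴴGX + XᴴGξ = 0} equals the set {XB + X⊥C | B ∈ ℍ^{p×p} skew-Hermitian, C ∈ ℍ^{(n−p)×p}}. -/

import Mathlib

open Matrix
open scoped Quaternion

lemma quat_matrix_mul_eq_one_comm {m : Type*} [Fintype m] [DecidableEq m]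
    (A B : Matrix m m ℍ[ℝ]) (h : A * B = 1) : B * A = 1 := by
  have hs : Function.Surjective (LinearMap.mulLeft ℝ A) := fun x =>
    ⟨B * x, by simp [LinearMap.mulLeft_apply, ← mul_assoc, h]⟩
  have hi : Function.Injective (LinearMap.mulLeft ℝ A) :=
    (LinearMap.injective_iff_surjective).mpr hs
  have : (LinearMap.mulLeft ℝ A) (B * A) = (LinearMap.mulLeft ℝ A) 1 := by
    simp [LinearMap.mulLeft_apply, ← mul_assoc, h]
  exact hi this

/-- The tangent space of the generalized quaternionic Stiefel manifold at `X`,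
`{ξ | ξᴴGX + XᴴGξ = 0}`, equals `{XB + X⊥C | B skew-Hermitian, C arbitrary}`. -/
theorem tangentSpace_generalized_quaternionic_stiefel (n p : ℕ) (hp : 0 < p) (hpn : p ≤ n)
    (G : Matrix (Fin n) (Fin n) ℍ[ℝ]) (hG : Gᴴ = G)
    (hGpd : ∀ x : Fin n → ℍ[ℝ], x ≠ 0 → 0 < (star x ⬝ᵥ G *ᵥ x).re)
    (X : Matrix (Fin n) (Fin p) ℍ[ℝ]) (hX : Xᴴ * G * X = 1)
    (Xperp : Matrix (Fin n) (Fin (n - p)) ℍ[ℝ])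
    (hXperp : Xperpᴴ * G * Xperp = 1) (hXXperp : Xᴴ * G * Xperp = 0) :
    {ξ : Matrix (Fin n) (Fin p) ℍ[ℝ] | ξᴴ * G * X + Xᴴ * G * ξ = 0} =
      {ξ : Matrix (Fin n) (Fin p) ℍ[ℝ] |
        ∃ (B : Matrix (Fin p) (Fin p) ℍ[ℝ]) (C : Matrix (Fin (n - p)) (Fin p) ℍ[ℝ]),
          Bᴴ = -B ∧ ξ = X * B + Xperp * C} := by
  -- `Xperpᴴ G X = 0`
  have hperpX : Xperpᴴ * G * X = 0 := by
    have h := congrArg conjTranspose hXXperp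
    rw [conjTranspose_mul, conjTranspose_mul, conjTranspose_conjTranspose, hG,
      conjTranspose_zero] at h
    rw [Matrix.mul_assoc]
    exact h
  -- the completeness relation `X Xᴴ G + Xperp Xperpᴴ G = 1`
  have key : X * (Xᴴ * G) + Xperp * (Xperpᴴ * G) = 1 := by
    have e : Fin n ≃ Fin p ⊕ Fin (n - p) :=
      (finCongr (Nat.add_sub_cancel' hpn)).symm.trans finSumFinEquiv.symm
    have hLM : (fromRows (Xᴴ * G) (Xperpᴴ * G)).submatrix e id *
        (fromCols X Xperp).submatrix id e = 1 := by
      rw [← Matrix.submatrix_mul _ _ e (id : Fin n → Fin n) e Function.bijective_id,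
        fromRows_mul_fromCols, hX, hXperp, hXXperp, hperpX, fromBlocks_one,
        submatrix_one_equiv]
    have hML := quat_matrix_mul_eq_one_comm _ _ hLM
    rw [← Matrix.submatrix_mul _ _ (id : Fin n → Fin n) e (id : Fin n → Fin n) e.bijective,
      fromCols_mul_fromRows, submatrix_id_id] at hML
    exact hML
  ext ξ
  simp only [Set.mem_setOf_eq]
  constructor
  · intro hξ
    refine ⟨Xᴴ * G * ξ, Xperpᴴ * G * ξ, ?_, ?_⟩
    · have hξ' : ξᴴ * (G * X) + Xᴴ * (G * ξ) = 0 := by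
        rw [← Matrix.mul_assoc, ← Matrix.mul_assoc]; exact hξ
      have h2 : ξᴴ * (G * X) = -(Xᴴ * (G * ξ)) := by
        rw [← neg_eq_of_add_eq_zero_right hξ', neg_neg]
      simp only [conjTranspose_mul, hG, conjTranspose_conjTranspose, Matrix.mul_assoc]
      exact h2
    · have h := congrArg (fun M => M * ξ) key
      simp only [Matrix.add_mul, Matrix.one_mul, Matrix.mul_assoc] at h
      simp only [Matrix.mul_assoc]
      exact h.symm
  · rintro ⟨B, C, hB, rfl⟩
    have e1 : Xᴴ * (G * (X * B)) = B := by
      rw [← Matrix.mul_assoc, ← Matrix.mul_assoc, hX, Matrix.one_mul]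
    have e2 : Xᴴ * (G * (Xperp * C)) = 0 := by
      rw [← Matrix.mul_assoc, ← Matrix.mul_assoc, hXXperp, Matrix.zero_mul]
    have e3 : Bᴴ * (Xᴴ * (G * X)) = Bᴴ := by
      rw [← Matrix.mul_assoc Xᴴ G X, hX, Matrix.mul_one]
    have e4 : Cᴴ * (Xperpᴴ * (G * X)) = 0 := by
      rw [← Matrix.mul_assoc Xperpᴴ G X, hperpX, Matrix.mul_zero]
    simp only [conjTranspose_add, conjTranspose_mul, Matrix.add_mul, Matrix.mul_add,
      Matrix.mul_assoc, e1, e2, e3, e4, add_zero]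
    rw [hB, neg_add_cancel]
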